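/- Let H ≤ G = ∏_{x∈E} Γ_x. For S ⊆ E and x ∈ E \ S, the increment |H_{S∪{x}}| / |H_S| equals the cardinality of the kernel of the projection map π_S : H_{S∪{x}} → H_S; moreover this kernel size is weakly decreasing in S: if S ⊆ T with x ∉ T, then |ker(π_T : H_{T∪{x}} → H_T)| ≤ |ker(π_S : H_{S∪{x}} → H_S)| (law of diminishing returns). -/

import Mathlib

/-- Coordinate projection of a product of groups onto the coordinates in `S`. -/
def proj {E : Type} (Γ : E → Type) [∀ x, Group (Γ x)] (S : Finset E) :
    (∀ x, Γ x) →* (∀ x : S, Γ x) :=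
  Pi.monoidHom fun i => Pi.evalMonoidHom Γ i

/-- Restriction homomorphism from the product over `T` to the product over `S ⊆ T`. -/
def restr {E : Type} (Γ : E → Type) [∀ x, Group (Γ x)] {S T : Finset E} (h : S ⊆ T) :
    (∀ x : T, Γ x) →* (∀ x : S, Γ x) :=
  Pi.monoidHom fun i => Pi.evalMonoidHom (fun x : T => Γ x) ⟨i.1, h i.2⟩

/-- the increment `|H_{S∪{x}}|/|H_S|` equals the size of the kernel of
`π_S : H_{S∪{x}} → H_S`, and this kernel size is weakly decreasing in `S`
(law of diminishing returns). -/
theorem stmt2 {E : Type} [Fintype E] [DecidableEq E]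
    (Γ : E → Type) [∀ x, Group (Γ x)] [∀ x, Fintype (Γ x)]
    (H : Subgroup (∀ x, Γ x)) (x : E) (S T : Finset E)
    (hST : S ⊆ T) (hxT : x ∉ T) :
    Nat.card (Subgroup.map (proj Γ (insert x S)) H) =
      Nat.card (Subgroup.map (proj Γ S) H) *
        Nat.card ↥(Subgroup.map (proj Γ (insert x S)) H ⊓
          (restr Γ (Finset.subset_insert x S)).ker) ∧
    Nat.card ↥(Subgroup.map (proj Γ (insert x T)) H ⊓
        (restr Γ (Finset.subset_insert x T)).ker) ≤
      Nat.card ↥(Subgroup.map (proj Γ (insert x S)) H ⊓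
        (restr Γ (Finset.subset_insert x S)).ker) := by
  constructor
  · -- Part 1
    set K := Subgroup.map (proj Γ (insert x S)) H with hK
    set r := restr Γ (Finset.subset_insert x S) with hr
    set f := r.comp K.subtype with hf
    have hcomp : r.comp (proj Γ (insert x S)) = proj Γ S := rfl
    have hrange : f.range = Subgroup.map (proj Γ S) H := by
      rw [hf, MonoidHom.range_comp, Subgroup.range_subtype, hK, Subgroup.map_map, hcomp]
    have hquot : Nat.card (K ⧸ f.ker) = Nat.card (Subgroup.map (proj Γ S) H) := by
      rw [← hrange]
      exact Nat.card_congr (QuotientGroup.quotientKerEquivRange f).toEquiv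
    have hker : Nat.card f.ker = Nat.card ↥(K ⊓ r.ker) := by
      refine Nat.card_congr ⟨fun a => ⟨a.1.1, a.1.2, a.2⟩, fun b => ⟨⟨b.1, b.2.1⟩, b.2.2⟩,
        fun a => rfl, fun b => rfl⟩
    have := Subgroup.card_eq_card_quotient_mul_card_subgroup (α := K) f.ker
    rw [hquot, hker] at this
    exact this
  · -- Part 2: monotonicity
    set KT := Subgroup.map (proj Γ (insert x T)) H ⊓ (restr Γ (Finset.subset_insert x T)).ker
      with hKT
    set KS := Subgroup.map (proj Γ (insert x S)) H ⊓ (restr Γ (Finset.subset_insert x S)).ker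
      with hKS
    have hsub : insert x S ⊆ insert x T := Finset.insert_subset_insert x hST
    have hmap : ∀ y : ↥KT, restr Γ hsub y.1 ∈ KS := by
      rintro ⟨y, hy1, hy2⟩
      constructor
      · obtain ⟨g, hg, rfl⟩ := hy1
        exact ⟨g, hg, rfl⟩
      · -- restriction to S is trivial since S ⊆ T and y is trivial on T
        have hy2' : ∀ i : T, y ⟨i.1, Finset.subset_insert x T i.2⟩ = 1 :=
          fun i => congrFun hy2 i
        funext i
        exact hy2' ⟨i.1, hST i.2⟩
    have hinj : Function.Injective fun y : ↥KT => (⟨restr Γ hsub y.1, hmap y⟩ : ↥KS) := by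
      rintro ⟨y, hy1, hy2⟩ ⟨z, hz1, hz2⟩ h
      have h' : restr Γ hsub y = restr Γ hsub z := congrArg Subtype.val h
      have hy2' : ∀ i : T, y ⟨i.1, Finset.subset_insert x T i.2⟩ = 1 :=
        fun i => congrFun hy2 i
      have hz2' : ∀ i : T, z ⟨i.1, Finset.subset_insert x T i.2⟩ = 1 :=
        fun i => congrFun hz2 i
      ext i
      rcases Finset.mem_insert.mp i.2 with hi | hi
      · have := congrFun h' ⟨i.1, by simp [hi]⟩
        exact this
      · exact (hy2' ⟨i.1, hi⟩).trans (hz2' ⟨i.1, hi⟩).symm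
    exact Nat.card_le_card_of_injective _ hinj
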